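/- Let N ≥ 2, D_N = 2/(N ω_N), a ∈ ℝ^N \ {0}, and let y₀ ∈ ℝ^N \ {0} satisfy a = D_N y₀/|y₀|^{2N-2}. Then the Hessian of F(y) = ⟨a,y⟩ - D_N/((4-2N)|y|^{2N-4}) (for N ≥ 3; for N = 2 take F(y) = ⟨a,y⟩ - (1/π) ln|y|) at y₀ equals -D_N |y₀|^{-(2N-2)} (I + (2-2N) y₀ y₀ᵀ/|y₀|²), and its determinant equals (-1)^N (3-2N) |a|^{N(2N-2)/(2N-3)} / D_N^{N/(2N-3)}, which is nonzero; in particular y₀ is a non-degenerate critical point of F. -/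

import Mathlib

open Real MeasureTheory

lemma aux_sq (N : ℕ) (z : EuclideanSpace ℝ (Fin N)) :
    HasFDerivAt (fun y : EuclideanSpace ℝ (Fin N) => (inner ℝ y y : ℝ))
      ((2:ℝ) • (innerSL ℝ z : EuclideanSpace ℝ (Fin N) →L[ℝ] ℝ)) z := by
  have h := (hasFDerivAt_id z).inner ℝ (hasFDerivAt_id z)
  refine h.congr_fderiv ?_
  ext v
  simp [fderivInnerCLM_apply, real_inner_comm, two_mul, mul_comm]

lemma aux_d1 (N : ℕ) (hN : 2 ≤ N) (DN : ℝ) (hDN2 : N = 2 → DN = 1 / π)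
    (a : EuclideanSpace ℝ (Fin N))
    (F : EuclideanSpace ℝ (Fin N) → ℝ)
    (hF : ∀ y, F y = (inner ℝ a y : ℝ) -
      (if N = 2 then (1 / π) * Real.log ‖y‖
       else DN / (((4 : ℝ) - 2 * N) * ‖y‖ ^ (2 * N - 4))))
    (z : EuclideanSpace ℝ (Fin N)) (hz : z ≠ 0) :
    HasFDerivAt F
      (innerSL ℝ a - (DN * ((‖z‖:ℝ)^2) ^ (1-(N:ℤ))) • (innerSL ℝ z : EuclideanSpace ℝ (Fin N) →L[ℝ] ℝ)) z := by
  have hz2 : (0:ℝ) < ‖z‖^2 := by have := norm_pos_iff.mpr hz; positivity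
  obtain ⟨φ, hφ, hFeq⟩ : ∃ φ : ℝ → ℝ,
      HasDerivAt φ (DN/2 * ((‖z‖:ℝ)^2)^(1-(N:ℤ))) (‖z‖^2) ∧
      F =ᶠ[nhds z] fun y => (inner ℝ a y : ℝ) - φ (inner ℝ y y) := by
    rcases eq_or_ne N 2 with h2 | h2
    · refine ⟨fun t => (DN/2) * Real.log t, ?_, ?_⟩
      · have h := (Real.hasDerivAt_log hz2.ne').const_mul (DN/2)
        refine h.congr_deriv ?_
        subst h2
        norm_num
      · filter_upwards with y
        rw [hF, if_pos h2, hDN2 h2, real_inner_self_eq_norm_sq, Real.log_pow]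
        push_cast
        ring
    · have h3 : 3 ≤ N := by omega
      have h3' : (3:ℝ) ≤ (N:ℝ) := by exact_mod_cast h3
      have hne : ((4:ℝ) - 2*N) ≠ 0 := by nlinarith
      refine ⟨fun t => DN/((4:ℝ)-2*N) * t^((2:ℤ)-N), ?_, ?_⟩
      · have h := (hasDerivAt_zpow ((2:ℤ)-N) (‖z‖^2) (Or.inl hz2.ne')).const_mul (DN/((4:ℝ)-2*N))
        have he : ((2:ℤ)-N) - 1 = 1 - N := by ring
        rw [he] at h
        refine h.congr_deriv ?_
        push_cast
        field_simp
        ring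
      · filter_upwards [isOpen_compl_singleton.eventually_mem hz] with y hy
        have hyn : (0:ℝ) < ‖y‖ := norm_pos_iff.mpr hy
        rw [hF, if_neg h2, real_inner_self_eq_norm_sq]
        congr 1
        have hp : ((‖y‖:ℝ)^2)^((2:ℤ)-N) = (‖y‖ ^ (2*N-4:ℕ))⁻¹ := by
          rw [← zpow_natCast (‖y‖) 2, ← zpow_mul, ← zpow_natCast (‖y‖) (2*N-4), ← zpow_neg]
          congr 1
          omega
        rw [hp, ← div_div, div_eq_mul_inv]
  have hA : HasFDerivAt (fun y : EuclideanSpace ℝ (Fin N) => (inner ℝ a y : ℝ))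
      (innerSL ℝ a : EuclideanSpace ℝ (Fin N) →L[ℝ] ℝ) z :=
    (innerSL ℝ a : EuclideanSpace ℝ (Fin N) →L[ℝ] ℝ).hasFDerivAt
  have hφ' : HasDerivAt φ (DN/2 * ((‖z‖:ℝ)^2)^(1-(N:ℤ))) (inner ℝ z z : ℝ) := by
    rwa [real_inner_self_eq_norm_sq]
  have hcomp := hφ'.comp_hasFDerivAt (f := fun y : EuclideanSpace ℝ (Fin N) => (inner ℝ y y : ℝ)) z (aux_sq N z)
  refine ((hA.sub hcomp).congr_of_eventuallyEq hFeq).congr_fderiv ?_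
  ext v
  simp [ContinuousLinearMap.smul_apply]
  ring

lemma aux_part1 (N : ℕ) (hN : 2 ≤ N) (DN : ℝ) (hDN2 : N = 2 → DN = 1 / π)
    (a : EuclideanSpace ℝ (Fin N))
    (F : EuclideanSpace ℝ (Fin N) → ℝ)
    (hF : ∀ y, F y = (inner ℝ a y : ℝ) -
      (if N = 2 then (1 / π) * Real.log ‖y‖
       else DN / (((4 : ℝ) - 2 * N) * ‖y‖ ^ (2 * N - 4))))
    (y₀ : EuclideanSpace ℝ (Fin N)) (hy₀ : y₀ ≠ 0) (i j : Fin N) :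
    fderiv ℝ (fun z => fderiv ℝ F z (EuclideanSpace.single i 1)) y₀
        (EuclideanSpace.single j 1) = -(DN / ‖y₀‖ ^ (2 * N - 2)) *
      ((if i = j then (1 : ℝ) else 0) + ((2 : ℝ) - 2 * N) * y₀ i * y₀ j / ‖y₀‖ ^ 2) := by
  have hr : (0:ℝ) < ‖y₀‖ := norm_pos_iff.mpr hy₀
  have hy2 : (0:ℝ) < ‖y₀‖^2 := by positivity
  have hev : (fun z => fderiv ℝ F z (EuclideanSpace.single i 1)) =ᶠ[nhds y₀]
      (fun z => (inner ℝ a (EuclideanSpace.single i 1) : ℝ)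
        - DN * ((((‖z‖:ℝ)^2)^(1-(N:ℤ))) * z i)) := by
    filter_upwards [isOpen_compl_singleton.eventually_mem hy₀] with z hz
    rw [(aux_d1 N hN DN hDN2 a F hF z hz).fderiv]
    simp [EuclideanSpace.inner_single_right]
    ring
  rw [hev.fderiv_eq]
  have hpow : HasFDerivAt (fun z : EuclideanSpace ℝ (Fin N) => ((‖z‖:ℝ)^2)^(1-(N:ℤ)))
      ((((1-(N:ℤ)):ℝ) * ((‖y₀‖:ℝ)^2)^(1-(N:ℤ)-1)) • ((2:ℝ) • (innerSL ℝ y₀ : EuclideanSpace ℝ (Fin N) →L[ℝ] ℝ))) y₀ := by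
    have hd : HasDerivAt (fun t : ℝ => t^(1-(N:ℤ)))
        (((1-(N:ℤ)):ℝ) * ((‖y₀‖:ℝ)^2)^(1-(N:ℤ)-1)) (inner ℝ y₀ y₀ : ℝ) := by
      rw [real_inner_self_eq_norm_sq]
      exact_mod_cast hasDerivAt_zpow (1-(N:ℤ)) _ (Or.inl hy2.ne')
    have h := hd.comp_hasFDerivAt (f := fun y : EuclideanSpace ℝ (Fin N) => (inner ℝ y y : ℝ)) y₀ (aux_sq N y₀)
    have heq : (fun z : EuclideanSpace ℝ (Fin N) => ((‖z‖:ℝ)^2)^(1-(N:ℤ)))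
        = ((fun t : ℝ => t^(1-(N:ℤ))) ∘ fun y : EuclideanSpace ℝ (Fin N) => (inner ℝ y y : ℝ)) := by
      funext y
      simp only [Function.comp_apply, real_inner_self_eq_norm_sq]
    rw [heq]
    exact h
  have hproj : HasFDerivAt (fun z : EuclideanSpace ℝ (Fin N) => z i)
      (EuclideanSpace.proj i : EuclideanSpace ℝ (Fin N) →L[ℝ] ℝ) y₀ :=
    (EuclideanSpace.proj i : EuclideanSpace ℝ (Fin N) →L[ℝ] ℝ).hasFDerivAt
  have hG := ((hpow.mul hproj).const_mul DN).const_sub ((inner ℝ a (EuclideanSpace.single i 1) : ℝ))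
  rw [HasFDerivAt.fderiv (f := fun z : EuclideanSpace ℝ (Fin N) => (inner ℝ a (EuclideanSpace.single i 1) : ℝ)
          - DN * ((((‖z‖:ℝ)^2)^(1-(N:ℤ))) * z i)) hG]
  simp [EuclideanSpace.inner_single_right, EuclideanSpace.single_apply]
  have e1 : ((‖y₀‖:ℝ)^2)^(1-(N:ℤ)) = (‖y₀‖^(2*N-2:ℕ))⁻¹ := by
    rw [← zpow_natCast (‖y₀‖) 2, ← zpow_mul, ← zpow_natCast (‖y₀‖) (2*N-2), ← zpow_neg]
    congr 1
    omega
  have e2 : (((‖y₀‖:ℝ)^2)^N) = (‖y₀‖^(2*N-2:ℕ)) * ‖y₀‖^2 := by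
    rw [← pow_mul, ← pow_add]
    congr 1
    omega
  have h1 : (‖y₀‖:ℝ)^(2*N-2:ℕ) ≠ 0 := by positivity
  have h2 : (‖y₀‖:ℝ)^2 ≠ 0 := hy2.ne'
  rw [e1, e2]
  rcases eq_or_ne i j with hij | hij <;> simp [hij] <;> field_simp <;> ring

lemma aux_det (N : ℕ) (c : ℝ) (u v : Fin N → ℝ) (H : Matrix (Fin N) (Fin N) ℝ)
    (hH : ∀ i j, H i j = c * ((if i = j then (1:ℝ) else 0) + u i * v j)) :
    H.det = c ^ N * (1 + dotProduct v u) := by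
  have : H = c • (1 + Matrix.replicateCol Unit u * Matrix.replicateRow Unit v) := by
    ext i j
    rw [hH]
    rcases eq_or_ne i j with hij | hij <;>
      simp [Matrix.mul_apply, Matrix.one_apply, hij]
  rw [this, Matrix.det_smul, Matrix.det_one_add_replicateCol_mul_replicateRow, Fintype.card_fin]

lemma aux_rpow (N : ℕ) (hN : 2 ≤ N) (DN r A : ℝ) (hD : 0 < DN) (hr : 0 < r)
    (hA : A = DN / r^(2*N-2) * r) :
    (DN / r^(2*N-2))^N =
      A ^ (((N : ℝ) * (2 * (N : ℝ) - 2)) / (2 * (N : ℝ) - 3)) /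
      DN ^ ((N : ℝ) / (2 * (N : ℝ) - 3)) := by
  have hN' : (2:ℝ) ≤ (N:ℝ) := by exact_mod_cast hN
  have hα : (2*(N:ℝ)-3) ≠ 0 := by nlinarith
  have hrp : (0:ℝ) < r^(2*N-2) := pow_pos hr _
  have hL : (0:ℝ) < DN / r^(2*N-2) := div_pos hD hrp
  have hApos : (0:ℝ) < A := by rw [hA]; positivity
  have hLHS : (0:ℝ) < (DN / r^(2*N-2))^N := pow_pos hL N
  have hRHS : (0:ℝ) < A ^ (((N : ℝ) * (2 * (N : ℝ) - 2)) / (2 * (N : ℝ) - 3)) /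
      DN ^ ((N : ℝ) / (2 * (N : ℝ) - 3)) :=
    div_pos (Real.rpow_pos_of_pos hApos _) (Real.rpow_pos_of_pos hD _)
  rw [← Real.exp_log hLHS, ← Real.exp_log hRHS]
  congr 1
  rw [Real.log_pow, Real.log_div hD.ne' hrp.ne', Real.log_pow,
    Real.log_div (Real.rpow_pos_of_pos hApos _).ne' (Real.rpow_pos_of_pos hD _).ne',
    Real.log_rpow hApos, Real.log_rpow hD, hA,
    Real.log_mul (div_pos hD hrp).ne' hr.ne', Real.log_div hD.ne' hrp.ne', Real.log_pow]
  have hc : ((2*N-2:ℕ):ℝ) = 2*(N:ℝ)-2 := by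
    have h2 : (2:ℕ) ≤ 2*N := by omega
    push_cast [Nat.cast_sub h2]
    ring
  rw [hc]
  field_simp
  rw [eq_div_iff (by contrapose! hα; linarith)]
  ring

/-- For `N ≥ 2`, `D_N = 2/(N ω_N)`, `a ≠ 0` and `y₀ ≠ 0` with `a = D_N y₀/|y₀|^{2N-2}`,
the Hessian of `F(y) = ⟨a,y⟩ - D_N/((4-2N)|y|^{2N-4})` (for `N = 2`,
`F(y) = ⟨a,y⟩ - (1/π) ln|y|`) at `y₀` equals
`-D_N |y₀|^{-(2N-2)} (I + (2-2N) y₀ y₀ᵀ/|y₀|²)`, whose determinant is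
`(-1)^N (3-2N) |a|^{N(2N-2)/(2N-3)}/D_N^{N/(2N-3)} ≠ 0`; so `y₀` is non-degenerate. -/
theorem stmt_3 (N : ℕ) (hN : 2 ≤ N)
    (ω DN : ℝ)
    (hω : ω = (volume (Metric.ball (0 : EuclideanSpace ℝ (Fin N)) 1)).toReal)
    (hD : DN = 2 / ((N : ℝ) * ω))
    (a y₀ : EuclideanSpace ℝ (Fin N)) (ha : a ≠ 0) (hy₀ : y₀ ≠ 0)
    (hay : a = (DN / ‖y₀‖ ^ (2 * N - 2)) • y₀)
    (F : EuclideanSpace ℝ (Fin N) → ℝ)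
    (hF : ∀ y, F y = (inner ℝ a y : ℝ) -
      (if N = 2 then (1 / π) * Real.log ‖y‖
       else DN / (((4 : ℝ) - 2 * N) * ‖y‖ ^ (2 * N - 4))))
    (H : Matrix (Fin N) (Fin N) ℝ)
    (hH : ∀ i j, H i j = -(DN / ‖y₀‖ ^ (2 * N - 2)) *
      ((if i = j then (1 : ℝ) else 0) + ((2 : ℝ) - 2 * N) * y₀ i * y₀ j / ‖y₀‖ ^ 2)) :
    (∀ i j, fderiv ℝ (fun z => fderiv ℝ F z (EuclideanSpace.single i 1)) y₀
        (EuclideanSpace.single j 1) = H i j) ∧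
    H.det = (-1 : ℝ) ^ N * ((3 : ℝ) - 2 * N) *
      ‖a‖ ^ (((N : ℝ) * (2 * (N : ℝ) - 2)) / (2 * (N : ℝ) - 3)) /
      DN ^ ((N : ℝ) / (2 * (N : ℝ) - 3)) ∧
    H.det ≠ 0 := by
  have hN' : (2:ℝ) ≤ (N:ℝ) := by exact_mod_cast hN
  have hr : (0:ℝ) < ‖y₀‖ := norm_pos_iff.mpr hy₀
  have hy2 : (0:ℝ) < ‖y₀‖^2 := by positivity
  have hωpos : 0 < ω := by
    rw [hω]
    exact ENNReal.toReal_pos (Metric.measure_ball_pos _ _ one_pos).ne' measure_ball_lt_top.ne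
  have hDpos : 0 < DN := by
    rw [hD]
    have : (0:ℝ) < (N:ℝ) := by linarith
    positivity
  have hDN2 : N = 2 → DN = 1 / π := by
    intro h2
    subst h2
    have hπ : ω = π := by
      rw [hω, EuclideanSpace.volume_ball]
      simp [Real.sq_sqrt pi_pos.le]
      rw [show (1:ℝ)+1 = 2 by norm_num, Real.Gamma_two]
      simp [ENNReal.toReal_ofReal pi_pos.le]
    rw [hD, hπ]
    norm_num
    ring
  -- determinant
  have hrp : (0:ℝ) < ‖y₀‖^(2*N-2) := pow_pos hr _
  have hL : (0:ℝ) < DN / ‖y₀‖^(2*N-2) := div_pos hDpos hrp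
  have hsum : ∑ k, y₀ k * y₀ k = ‖y₀‖^2 := by
    have h := real_inner_self_eq_norm_sq y₀
    rw [← h]
    simp only [PiLp.inner_apply, RCLike.inner_apply, conj_trivial]
  have hdet : H.det = (-(DN / ‖y₀‖^(2*N-2)))^N * ((3:ℝ) - 2*N) := by
    rw [aux_det N (-(DN / ‖y₀‖^(2*N-2))) (fun i => y₀ i)
      (fun j => ((2:ℝ) - 2*N) * y₀ j / ‖y₀‖^2) H (fun i j => by rw [hH]; ring)]
    congr 1
    rw [dotProduct]
    have : ∀ k, ((2:ℝ) - 2*N) * y₀ k / ‖y₀‖^2 * y₀ k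
        = (((2:ℝ) - 2*N) / ‖y₀‖^2) * (y₀ k * y₀ k) := by
      intro k; ring
    rw [Finset.sum_congr rfl (fun k _ => this k), ← Finset.mul_sum, hsum]
    field_simp
    ring
  have hnorm : ‖a‖ = DN / ‖y₀‖^(2*N-2) * ‖y₀‖ := by
    rw [hay, norm_smul, Real.norm_eq_abs, abs_of_pos hL]
  have hkey := aux_rpow N hN DN ‖y₀‖ ‖a‖ hDpos hr hnorm
  refine ⟨fun i j => (aux_part1 N hN DN hDN2 a F hF y₀ hy₀ i j).trans (hH i j).symm, ?_, ?_⟩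
  · rw [hdet, neg_pow, mul_assoc, hkey]
    ring
  · rw [hdet]
    have h1 : (-(DN / ‖y₀‖^(2*N-2)))^N ≠ 0 := pow_ne_zero _ (neg_ne_zero.mpr hL.ne')
    have h2 : ((3:ℝ) - 2*N) ≠ 0 := by nlinarith
    exact mul_ne_zero h1 h2
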